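/- Let 1 ≤ m < n and let Λ ≤ SL(n,ℝ) be an adapted cocompact lattice. Then for all z, z' ∈ Z, the orbits J•[z] and J•[z'] in H⧸Λ are equal if and only if z'⁻¹·z ∈ Λ∩Z, and they are disjoint otherwise. In particular, for z ∈ Z with z ∉ Λ, the orbit J•[z] is disjoint from J•[e]. -/

import Mathlib

open Matrix
open scoped Pointwise

abbrev SLR (n : ℕ) : Type := Matrix.SpecialLinearGroup (Fin n) ℝ

instance (n : ℕ) : TopologicalSpace (SLR n) :=
  TopologicalSpace.induced (fun g => (g : Matrix (Fin n) (Fin n) ℝ)) inferInstance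

/-- The index identification `Fin m ⊕ Fin (n-m) ≃ Fin n`. -/
def finBlockEquiv {m n : ℕ} (h : m ≤ n) : Fin m ⊕ Fin (n - m) ≃ Fin n :=
  finSumFinEquiv.trans (finCongr (Nat.add_sub_cancel' h))

/-- Upper-left block embedding `SL(m,ℝ) →* SL(n,ℝ)`, `g ↦ diag(g, I_{n-m})`. -/
noncomputable def iotaJ {m n : ℕ} (h : m ≤ n) : SLR m →* SLR n where
  toFun g :=
    ⟨(Matrix.reindex (finBlockEquiv h) (finBlockEquiv h))
        (Matrix.fromBlocks (g : Matrix (Fin m) (Fin m) ℝ) 0 0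
          (1 : Matrix (Fin (n - m)) (Fin (n - m)) ℝ)), by
      simp [Matrix.det_fromBlocks_zero₂₁]⟩
  map_one' := by
    apply Subtype.ext
    simp [Matrix.fromBlocks_one]
  map_mul' g₁ g₂ := by
    apply Subtype.ext
    simp only [Matrix.SpecialLinearGroup.coe_mul, Matrix.reindex_apply]
    erw [Matrix.SpecialLinearGroup.coe_mul]
    rw [Matrix.submatrix_mul_equiv _ _ _ ((finBlockEquiv h).symm) _,
      Matrix.fromBlocks_multiply]
    simp

/-- Lower-right block embedding `SL(n-m,ℝ) →* SL(n,ℝ)`, `S ↦ diag(I_m, S)`. -/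
noncomputable def iotaZ {m n : ℕ} (h : m ≤ n) : SLR (n - m) →* SLR n where
  toFun S :=
    ⟨(Matrix.reindex (finBlockEquiv h) (finBlockEquiv h))
        (Matrix.fromBlocks (1 : Matrix (Fin m) (Fin m) ℝ) 0 0
          (S : Matrix (Fin (n - m)) (Fin (n - m)) ℝ)), by
      simp [Matrix.det_fromBlocks_zero₂₁]⟩
  map_one' := by
    apply Subtype.ext
    simp [Matrix.fromBlocks_one]
  map_mul' S₁ S₂ := by
    apply Subtype.ext
    simp only [Matrix.SpecialLinearGroup.coe_mul, Matrix.reindex_apply]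
    erw [Matrix.SpecialLinearGroup.coe_mul]
    rw [Matrix.submatrix_mul_equiv _ _ _ ((finBlockEquiv h).symm) _,
      Matrix.fromBlocks_multiply]
    simp

/-- `J ≤ SL(n,ℝ)`: image of the upper-left block embedding. -/
noncomputable def Jsub (m n : ℕ) (h : m ≤ n) : Subgroup (SLR n) := (iotaJ h).range

/-- `Z ≤ SL(n,ℝ)`: image of the lower-right block embedding. -/
noncomputable def Zsub (m n : ℕ) (h : m ≤ n) : Subgroup (SLR n) := (iotaZ h).range

/-- `D`: diagonal matrices with value `d₁` on the first `m` entries, `d₂` on the rest. -/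
def Dset (m n : ℕ) : Set (SLR n) :=
  { x | ∃ d₁ d₂ : ℝ, (x : Matrix (Fin n) (Fin n) ℝ) =
      Matrix.diagonal (fun i : Fin n => if (i : ℕ) < m then d₁ else d₂) }

/-- An adapted cocompact lattice in `SL(n,ℝ)`. -/
structure IsAdaptedLattice {m n : ℕ} (h : m ≤ n) (Λ : Subgroup (SLR n)) : Prop where
  discrete : DiscreteTopology ↥Λ
  cocompact : CompactSpace (SLR n ⧸ Λ)
  discreteJ : DiscreteTopology ↥(Λ ⊓ Jsub m n h)
  cocompactJ : CompactSpace (↥(Jsub m n h) ⧸ Λ.subgroupOf (Jsub m n h))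
  discreteZ : DiscreteTopology ↥(Λ ⊓ Zsub m n h)
  cocompactZ : CompactSpace (↥(Zsub m n h) ⧸ Λ.subgroupOf (Zsub m n h))
  interD : ((Λ : Set (SLR n)) ∩ Dset m n) = {1}
  interDJZ : ((Λ : Set (SLR n)) ∩ (Dset m n * (Jsub m n h : Set (SLR n)) * (Zsub m n h : Set (SLR n)))) =
      ((Λ ⊓ Jsub m n h : Subgroup (SLR n)) : Set (SLR n)) * ((Λ ⊓ Zsub m n h : Subgroup (SLR n)) : Set (SLR n))

/-- The orbit of the point `[z] = zΛ ∈ SL(n,ℝ)⧸Λ` under (left translation by) a set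
`S ⊆ SL(n,ℝ)`. -/
def orbitOf {n : ℕ} (Λ : Subgroup (SLR n)) (S : Set (SLR n)) (z : SLR n) :
    Set (SLR n ⧸ Λ) :=
  (fun j => ((QuotientGroup.mk (j * z)) : SLR n ⧸ Λ)) '' S

section Aux

lemma iotaJ_comm_iotaZ {m n : ℕ} (h : m ≤ n) (g : SLR m) (S : SLR (n - m)) :
    iotaJ h g * iotaZ h S = iotaZ h S * iotaJ h g := by
  apply Subtype.ext
  simp only [iotaJ, iotaZ, MonoidHom.coe_mk, OneHom.coe_mk,
    Matrix.SpecialLinearGroup.coe_mul, Matrix.reindex_apply]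
  change Matrix.reindex (finBlockEquiv h) (finBlockEquiv h)
      (Matrix.fromBlocks (g : Matrix (Fin m) (Fin m) ℝ) 0 0 1) *
    Matrix.reindex (finBlockEquiv h) (finBlockEquiv h)
      (Matrix.fromBlocks 1 0 0 (S : Matrix (Fin (n - m)) (Fin (n - m)) ℝ)) =
    Matrix.reindex (finBlockEquiv h) (finBlockEquiv h)
      (Matrix.fromBlocks 1 0 0 (S : Matrix (Fin (n - m)) (Fin (n - m)) ℝ)) *
    Matrix.reindex (finBlockEquiv h) (finBlockEquiv h)
      (Matrix.fromBlocks (g : Matrix (Fin m) (Fin m) ℝ) 0 0 1)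
  simp only [Matrix.reindex_apply]
  rw [Matrix.submatrix_mul_equiv _ _ _ ((finBlockEquiv h).symm) _,
    Matrix.submatrix_mul_equiv _ _ _ ((finBlockEquiv h).symm) _,
    Matrix.fromBlocks_multiply, Matrix.fromBlocks_multiply]
  simp

lemma J_comm_Z {m n : ℕ} (h : m ≤ n) {j z : SLR n}
    (hj : j ∈ Jsub m n h) (hz : z ∈ Zsub m n h) : j * z = z * j := by
  obtain ⟨g, rfl⟩ := hj
  obtain ⟨S, rfl⟩ := hz
  exact iotaJ_comm_iotaZ h g S

lemma J_inter_Z {m n : ℕ} (h : m ≤ n) {x : SLR n}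
    (hj : x ∈ Jsub m n h) (hz : x ∈ Zsub m n h) : x = 1 := by
  obtain ⟨g, hg⟩ := hj
  obtain ⟨S, hS⟩ := hz
  have hco : ((iotaJ h g : SLR n) : Matrix (Fin n) (Fin n) ℝ)
      = ((iotaZ h S : SLR n) : Matrix (Fin n) (Fin n) ℝ) := by rw [hg, hS]
  simp only [iotaJ, iotaZ, MonoidHom.coe_mk, OneHom.coe_mk] at hco
  have hbl := (Matrix.reindex (finBlockEquiv h) (finBlockEquiv h)).injective hco
  have hg1 : (g : Matrix (Fin m) (Fin m) ℝ) = 1 := by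
    have := congrArg Matrix.toBlocks₁₁ hbl
    simpa [Matrix.toBlocks_fromBlocks₁₁] using this
  have : g = 1 := Subtype.ext hg1
  rw [← hg, this]
  exact _root_.map_one _

lemma one_mem_Dset {m n : ℕ} : (1 : SLR n) ∈ Dset m n := by
  refine ⟨1, 1, ?_⟩
  simp

end Aux

/-- for an adapted cocompact lattice, the `J`-orbits of `[z]` and `[z']`
(`z, z' ∈ Z`) coincide iff `z'⁻¹z ∈ Λ∩Z` and are disjoint otherwise; in particular for
`z ∈ Z` with `z ∉ Λ` the orbit `J•[z]` is disjoint from `J•[e]`. -/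
theorem orbits_eq_iff_disjoint (m n : ℕ) (hm : 1 ≤ m) (hmn : m < n)
    (Λ : Subgroup (SLR n)) (hΛ : IsAdaptedLattice hmn.le Λ) :
    (∀ z z' : SLR n, z ∈ Zsub m n hmn.le → z' ∈ Zsub m n hmn.le →
      ((orbitOf Λ (Jsub m n hmn.le) z = orbitOf Λ (Jsub m n hmn.le) z' ↔
          z'⁻¹ * z ∈ Λ ⊓ Zsub m n hmn.le) ∧
        (z'⁻¹ * z ∉ Λ ⊓ Zsub m n hmn.le →
          Disjoint (orbitOf Λ (Jsub m n hmn.le) z) (orbitOf Λ (Jsub m n hmn.le) z')))) ∧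
    (∀ z : SLR n, z ∈ Zsub m n hmn.le → z ∉ Λ →
      Disjoint (orbitOf Λ (Jsub m n hmn.le) z) (orbitOf Λ (Jsub m n hmn.le) 1)) := by
    classical
  set h := hmn.le
  -- key direction: non-disjoint orbits force z'⁻¹z ∈ Λ ⊓ Z
  have key : ∀ z z' : SLR n, z ∈ Zsub m n h → z' ∈ Zsub m n h →
      ¬ Disjoint (orbitOf Λ (Jsub m n h) z) (orbitOf Λ (Jsub m n h) z') →
      z'⁻¹ * z ∈ Λ ⊓ Zsub m n h := by
    intro z z' hz hz' hnd
    obtain ⟨q, hq1, hq2⟩ := Set.not_disjoint_iff.1 hnd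
    obtain ⟨j, hj, hjq⟩ := hq1
    obtain ⟨j', hj', hj'q⟩ := hq2
    have hjJ : j ∈ Jsub m n h := hj
    have hj'J : j' ∈ Jsub m n h := hj'
    have hmk : (QuotientGroup.mk (j * z) : SLR n ⧸ Λ) = QuotientGroup.mk (j' * z') :=
      hjq.trans hj'q.symm
    have hlamΛ : (j * z)⁻¹ * (j' * z') ∈ Λ := QuotientGroup.eq.1 hmk
    have hJJ : j⁻¹ * j' ∈ Jsub m n h := mul_mem (inv_mem hjJ) hj'J
    have hZZ : z⁻¹ * z' ∈ Zsub m n h := mul_mem (inv_mem hz) hz'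
    have hc : (j⁻¹ * j') * z⁻¹ = z⁻¹ * (j⁻¹ * j') := J_comm_Z h hJJ (inv_mem hz)
    have hlam : (j * z)⁻¹ * (j' * z') = (j⁻¹ * j') * (z⁻¹ * z') := by
      calc (j * z)⁻¹ * (j' * z') = (z⁻¹ * (j⁻¹ * j')) * z' := by group
        _ = ((j⁻¹ * j') * z⁻¹) * z' := by rw [hc]
        _ = (j⁻¹ * j') * (z⁻¹ * z') := by group
    have hmemDJZ : (j * z)⁻¹ * (j' * z') ∈
        (Λ : Set (SLR n)) ∩ (Dset m n * (Jsub m n h : Set (SLR n)) * (Zsub m n h : Set (SLR n))) := by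
      refine ⟨hlamΛ, ?_⟩
      rw [hlam]
      simpa using Set.mul_mem_mul (Set.mul_mem_mul one_mem_Dset hJJ) hZZ
    rw [hΛ.interDJZ] at hmemDJZ
    obtain ⟨a, ha, b, hb, hab⟩ := hmemDJZ
    have haΛJ : a ∈ Λ ⊓ Jsub m n h := ha
    have hbΛZ : b ∈ Λ ⊓ Zsub m n h := hb
    have h1 : a * b = (j⁻¹ * j') * (z⁻¹ * z') := by rw [← hlam]; exact hab
    have he : a⁻¹ * (j⁻¹ * j') = b * (z⁻¹ * z')⁻¹ := by
      have := congrArg (fun x => a⁻¹ * x * (z⁻¹ * z')⁻¹) h1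
      calc a⁻¹ * (j⁻¹ * j') = a⁻¹ * ((j⁻¹ * j') * (z⁻¹ * z')) * (z⁻¹ * z')⁻¹ := by group
        _ = a⁻¹ * (a * b) * (z⁻¹ * z')⁻¹ := by rw [h1]
        _ = b * (z⁻¹ * z')⁻¹ := by group
    have hxJ : a⁻¹ * (j⁻¹ * j') ∈ Jsub m n h := mul_mem (inv_mem haΛJ.2) hJJ
    have hxZ : a⁻¹ * (j⁻¹ * j') ∈ Zsub m n h := by
      rw [he]; exact mul_mem hbΛZ.2 (inv_mem hZZ)
    have hx1 : a⁻¹ * (j⁻¹ * j') = 1 := J_inter_Z h hxJ hxZ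
    have hbeq : b = z⁻¹ * z' := by
      have : b * (z⁻¹ * z')⁻¹ = 1 := by rw [← he, hx1]
      calc b = b * (z⁻¹ * z')⁻¹ * (z⁻¹ * z') := by group
        _ = 1 * (z⁻¹ * z') := by rw [this]
        _ = z⁻¹ * z' := one_mul _
    have : z'⁻¹ * z = b⁻¹ := by rw [hbeq]; group
    rw [this]
    exact inv_mem hbΛZ
  have conv : ∀ z z' : SLR n, z'⁻¹ * z ∈ Λ →
      orbitOf Λ (Jsub m n h) z = orbitOf Λ (Jsub m n h) z' := by
    intro z z' hmem
    have hfun : (fun j : SLR n => (QuotientGroup.mk (j * z) : SLR n ⧸ Λ)) =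
        fun j : SLR n => (QuotientGroup.mk (j * z') : SLR n ⧸ Λ) := by
      funext j
      refine QuotientGroup.eq.2 ?_
      have hrw : (j * z)⁻¹ * (j * z') = (z'⁻¹ * z)⁻¹ := by group
      rw [hrw]
      exact inv_mem hmem
    unfold orbitOf
    rw [hfun]
  have hne : ∀ z z' : SLR n, orbitOf Λ (Jsub m n h) z = orbitOf Λ (Jsub m n h) z' →
      ¬ Disjoint (orbitOf Λ (Jsub m n h) z) (orbitOf Λ (Jsub m n h) z') := by
    intro z z' heq
    refine Set.not_disjoint_iff.2 ⟨QuotientGroup.mk ((1 : SLR n) * z), ?_, ?_⟩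
    · exact ⟨1, one_mem _, rfl⟩
    · rw [← heq]; exact ⟨1, one_mem _, rfl⟩
  constructor
  · intro z z' hz hz'
    constructor
    · constructor
      · intro heq
        exact key z z' hz hz' (hne z z' heq)
      · intro hmem
        exact conv z z' hmem.1
    · intro hnot
      by_contra hnd
      exact hnot (key z z' hz hz' hnd)
  · intro z hz hzΛ
    by_contra hnd
    have := key z 1 hz (one_mem _) hnd
    rw [inv_one, one_mul] at this
    exact hzΛ this.1
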